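/- Let T be an acute lattice triangle whose circumcenter is a lattice point, and let ℓ₀ ≤ ℓ₁ ≤ ℓ₂ be the lattice lengths of its sides in increasing order. Then ℓ₁ ≥ 3. -/

import Mathlib

/-- Lattice length of the segment joining two lattice points. -/
def llen (P Q : ℤ × ℤ) : ℕ := Int.gcd (P.1 - Q.1) (P.2 - Q.2)

/-- Integer dot product on `ℤ × ℤ`. -/
def dotv (u v : ℤ × ℤ) : ℤ := u.1 * v.1 + u.2 * v.2

/-- The three vertices are not collinear (a genuine triangle). -/
def Noncollinear (V₀ V₁ V₂ : ℤ × ℤ) : Prop :=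
  (V₁.1 - V₀.1) * (V₂.2 - V₀.2) - (V₂.1 - V₀.1) * (V₁.2 - V₀.2) ≠ 0

/-- All three interior angles are strictly acute (positive dot products at each vertex). -/
def IsAcute (V₀ V₁ V₂ : ℤ × ℤ) : Prop :=
  0 < dotv (V₁ - V₀) (V₂ - V₀) ∧ 0 < dotv (V₀ - V₁) (V₂ - V₁) ∧
    0 < dotv (V₀ - V₂) (V₁ - V₂)

/-- `H` is the orthocenter of the triangle `V₀V₁V₂`. -/
def IsOrthocenter (H V₀ V₁ V₂ : ℤ × ℤ) : Prop :=
  dotv (H - V₀) (V₁ - V₂) = 0 ∧ dotv (H - V₁) (V₂ - V₀) = 0 ∧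
    dotv (H - V₂) (V₀ - V₁) = 0

/-- `F` is the circumcenter of the triangle `V₀V₁V₂` (equidistant from the vertices). -/
def IsCircumcenter (F V₀ V₁ V₂ : ℤ × ℤ) : Prop :=
  dotv (F - V₀) (F - V₀) = dotv (F - V₁) (F - V₁) ∧
    dotv (F - V₀) (F - V₀) = dotv (F - V₂) (F - V₂)

/-- Lattice perimeter of a lattice triangle. -/
def latPerim (V₀ V₁ V₂ : ℤ × ℤ) : ℕ := llen V₀ V₁ + llen V₁ V₂ + llen V₀ V₂

/-- The interior angle of the triangle at vertex `V`, with the other vertices `A`, `B`. -/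
noncomputable def angleAt (V A B : ℤ × ℤ) : ℝ :=
  Real.arccos ((((A.1 - V.1) * (B.1 - V.1) + (A.2 - V.2) * (B.2 - V.2) : ℤ) : ℝ) /
    (Real.sqrt (((A.1 - V.1) ^ 2 + (A.2 - V.2) ^ 2 : ℤ)) *
      Real.sqrt (((B.1 - V.1) ^ 2 + (B.2 - V.2) ^ 2 : ℤ))))


/-- Decompose an integer vector as gcd times a primitive vector. -/
lemma gcd_decomp (x y : ℤ) (h : Int.gcd x y ≠ 0) :
    ∃ e1 e2 : ℤ, x = (Int.gcd x y : ℤ) * e1 ∧ y = (Int.gcd x y : ℤ) * e2 ∧ IsCoprime e1 e2 := by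
  refine ⟨x / Int.gcd x y, y / Int.gcd x y,
    (Int.mul_ediv_cancel' (Int.gcd_dvd_left x y)).symm,
    (Int.mul_ediv_cancel' (Int.gcd_dvd_right x y)).symm, ?_⟩
  rw [Int.isCoprime_iff_gcd_eq_one]
  exact Int.gcd_div_gcd_div_gcd (Nat.pos_of_ne_zero h)

/-- A vector orthogonal to a primitive vector is an integer multiple of its rotation. -/
lemma ortho_decomp (e1 e2 s1 s2 : ℤ) (hcop : IsCoprime e1 e2) (h : e1 * s1 + e2 * s2 = 0) :
    ∃ m : ℤ, s1 = -(m * e2) ∧ s2 = m * e1 := by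
  obtain ⟨u, v, huv⟩ := hcop
  exact ⟨u * s2 - v * s1, by linear_combination (-s1) * huv + u * h,
    by linear_combination (-s2) * huv + v * h⟩

lemma abs_bound (d m : ℤ) (hd : d = 1 ∨ d = 2) (hmne : m ≠ 0) (heven : d = 2 → Even m) :
    d ≤ |m| := by
  rcases hd with hd | hd
  · subst hd
    rcases abs_cases m with ⟨h1, h2⟩ | ⟨h1, h2⟩ <;> omega
  · obtain ⟨k, hk⟩ := heven hd
    subst hd
    rcases abs_cases m with ⟨h1, h2⟩ | ⟨h1, h2⟩ <;> omega

lemma final_contra (d1 d2 m1 m2 p q : ℤ) (hd1 : 1 ≤ d1) (hd2 : 1 ≤ d2)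
    (hp : 0 < p) (hAq : 0 < m2 * q) (hBq : m1 * q < 0)
    (hb1 : d1 ≤ |m1|) (hb2 : d2 ≤ |m2|)
    (KEY : (d1 * d2 + m1 * m2) * q ^ 2 = (d1 * m2 - d2 * m1) * (p * q)) : False := by
  rcases lt_trichotomy q 0 with hq | hq | hq
  · have hm2neg : m2 < 0 := by
      rcases mul_pos_iff.mp hAq with ⟨_, h⟩ | ⟨h, _⟩
      · linarith
      · exact h
    have hm1pos : 0 < m1 := by
      rcases mul_neg_iff.mp hBq with ⟨h, _⟩ | ⟨_, h⟩
      · exact h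
      · linarith
    rw [abs_of_pos hm1pos] at hb1
    rw [abs_of_neg hm2neg] at hb2
    have t1 : d1 * d2 ≤ m1 * (-m2) :=
      mul_le_mul hb1 hb2 (by linarith) (by linarith)
    have t2 : d1 * m2 < 0 := mul_neg_of_pos_of_neg (by linarith) hm2neg
    have t3 : 0 < d2 * m1 := mul_pos (by linarith) hm1pos
    have h3 : 0 < (d1 * m2 - d2 * m1) * (p * q) :=
      mul_pos_of_neg_of_neg (by linarith) (mul_neg_of_pos_of_neg hp hq)
    have h4 : (d1 * d2 + m1 * m2) * q ^ 2 ≤ 0 :=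
      mul_nonpos_of_nonpos_of_nonneg (by linarith) (sq_nonneg q)
    linarith
  · rw [hq, mul_zero] at hAq; exact lt_irrefl 0 hAq
  · have hm2pos : 0 < m2 := by
      rcases mul_pos_iff.mp hAq with ⟨h, _⟩ | ⟨_, h⟩
      · exact h
      · linarith
    have hm1neg : m1 < 0 := by
      rcases mul_neg_iff.mp hBq with ⟨_, h⟩ | ⟨h, _⟩
      · linarith
      · exact h
    rw [abs_of_neg hm1neg] at hb1
    rw [abs_of_pos hm2pos] at hb2
    have t1 : d1 * d2 ≤ (-m1) * m2 :=
      mul_le_mul hb1 hb2 (by linarith) (by linarith)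
    have t2 : 0 < d1 * m2 := mul_pos (by linarith) hm2pos
    have t3 : d2 * m1 < 0 := mul_neg_of_pos_of_neg (by linarith) hm1neg
    have h3 : 0 < (d1 * m2 - d2 * m1) * (p * q) :=
      mul_pos (by linarith) (mul_pos hp hq)
    have h4 : (d1 * d2 + m1 * m2) * q ^ 2 ≤ 0 :=
      mul_nonpos_of_nonpos_of_nonneg (by linarith) (sq_nonneg q)
    linarith

set_option maxHeartbeats 1000000 in
theorem main_impossible (x0 y0 x1 y1 x2 y2 fx fy : ℤ)
    (hA0 : 0 < (x1 - x0) * (x2 - x0) + (y1 - y0) * (y2 - y0))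
    (hA1 : 0 < (x0 - x1) * (x2 - x1) + (y0 - y1) * (y2 - y1))
    (hA2 : 0 < (x0 - x2) * (x1 - x2) + (y0 - y2) * (y1 - y2))
    (hc1 : (fx - x0) * (fx - x0) + (fy - y0) * (fy - y0)
        = (fx - x1) * (fx - x1) + (fy - y1) * (fy - y1))
    (hc2 : (fx - x0) * (fx - x0) + (fy - y0) * (fy - y0)
        = (fx - x2) * (fx - x2) + (fy - y2) * (fy - y2))
    (hg1 : Int.gcd (x0 - x2) (y0 - y2) ≤ 2)
    (hg2 : Int.gcd (x1 - x2) (y1 - y2) ≤ 2) : False := by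
  have hne1 : Int.gcd (x0 - x2) (y0 - y2) ≠ 0 := by
    intro h
    rw [Int.gcd_eq_zero_iff] at h
    rw [h.1, h.2] at hA2
    simp at hA2
  have hne2 : Int.gcd (x1 - x2) (y1 - y2) ≠ 0 := by
    intro h
    rw [Int.gcd_eq_zero_iff] at h
    rw [h.1, h.2] at hA2
    simp at hA2
  obtain ⟨e1, e2, hE1, hE2, hecop⟩ := gcd_decomp (x0 - x2) (y0 - y2) hne1
  obtain ⟨f1, f2, hG1, hG2, hfcop⟩ := gcd_decomp (x1 - x2) (y1 - y2) hne2
  obtain ⟨d1, hd1def⟩ : ∃ d : ℤ, (Int.gcd (x0 - x2) (y0 - y2) : ℤ) = d := ⟨_, rfl⟩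
  obtain ⟨d2, hd2def⟩ : ∃ d : ℤ, (Int.gcd (x1 - x2) (y1 - y2) : ℤ) = d := ⟨_, rfl⟩
  rw [hd1def] at hE1 hE2
  rw [hd2def] at hG1 hG2
  have hd1b : 1 ≤ d1 ∧ d1 ≤ 2 := by
    rw [← hd1def]
    exact ⟨by exact_mod_cast Nat.one_le_iff_ne_zero.mpr hne1, by exact_mod_cast hg1⟩
  have hd2b : 1 ≤ d2 ∧ d2 ≤ 2 := by
    rw [← hd2def]
    exact ⟨by exact_mod_cast Nat.one_le_iff_ne_zero.mpr hne2, by exact_mod_cast hg2⟩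
  have hd1pos : 0 < d1 := by omega
  have hd2pos : 0 < d2 := by omega
  -- orthogonality relations from the circumcenter
  have hso1 : (x0 - x2) * (x0 + x2 - 2 * fx) + (y0 - y2) * (y0 + y2 - 2 * fy) = 0 := by
    linear_combination hc2
  have hso2 : (x1 - x2) * (x1 + x2 - 2 * fx) + (y1 - y2) * (y1 + y2 - 2 * fy) = 0 := by
    linear_combination hc2 - hc1
  have hes : e1 * (x0 + x2 - 2 * fx) + e2 * (y0 + y2 - 2 * fy) = 0 := by
    have h' : d1 * (e1 * (x0 + x2 - 2 * fx) + e2 * (y0 + y2 - 2 * fy)) = 0 := by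
      linear_combination hso1 - (x0 + x2 - 2 * fx) * hE1 - (y0 + y2 - 2 * fy) * hE2
    exact (mul_eq_zero.mp h').resolve_left (by omega)
  have hfs : f1 * (x1 + x2 - 2 * fx) + f2 * (y1 + y2 - 2 * fy) = 0 := by
    have h' : d2 * (f1 * (x1 + x2 - 2 * fx) + f2 * (y1 + y2 - 2 * fy)) = 0 := by
      linear_combination hso2 - (x1 + x2 - 2 * fx) * hG1 - (y1 + y2 - 2 * fy) * hG2
    exact (mul_eq_zero.mp h').resolve_left (by omega)
  obtain ⟨m1, hS1, hS2⟩ := ortho_decomp e1 e2 _ _ hecop hes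
  obtain ⟨m2, hT1, hT2⟩ := ortho_decomp f1 f2 _ _ hfcop hfs
  -- the two expressions for 2*(V₂ - F)
  have hX1 : -(m1 * e2) - d1 * e1 = -(m2 * f2) - d2 * f1 := by
    linear_combination -hS1 + hE1 + hT1 - hG1
  have hX2 : m1 * e1 - d1 * e2 = m2 * f1 - d2 * f2 := by
    linear_combination -hS2 + hE2 + hT2 - hG2
  have hI : d1 * (e1 ^ 2 + e2 ^ 2) = d2 * (e1 * f1 + e2 * f2) + m2 * (e1 * f2 - e2 * f1) := by
    linear_combination (-e1) * hX1 + (-e2) * hX2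
  have hIII : d2 * (f1 ^ 2 + f2 ^ 2) = d1 * (e1 * f1 + e2 * f2) - m1 * (e1 * f2 - e2 * f1) := by
    linear_combination f1 * hX1 + f2 * hX2
  have KEY : (d1 * d2 + m1 * m2) * (e1 * f2 - e2 * f1) ^ 2
      = (d1 * m2 - d2 * m1) * ((e1 * f1 + e2 * f2) * (e1 * f2 - e2 * f1)) := by
    linear_combination (d2 * (f1 ^ 2 + f2 ^ 2)) * hI
      + (d2 * (e1 * f1 + e2 * f2) + m2 * (e1 * f2 - e2 * f1)) * hIII
  -- acuteness in terms of p, q, m₁, m₂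
  have hdot2 : (x0 - x2) * (x1 - x2) + (y0 - y2) * (y1 - y2)
      = (d1 * d2) * (e1 * f1 + e2 * f2) := by
    linear_combination (x1 - x2) * hE1 + (d1 * e1) * hG1 + (y1 - y2) * hE2 + (d1 * e2) * hG2
  have hdot0 : (x1 - x0) * (x2 - x0) + (y1 - y0) * (y2 - y0)
      = d1 * (m2 * (e1 * f2 - e2 * f1)) := by
    linear_combination (x2 - x0) * hG1 - (x2 - x0) * hE1 - (d2 * f1 - d1 * e1) * hE1
      + (y2 - y0) * hG2 - (y2 - y0) * hE2 - (d2 * f2 - d1 * e2) * hE2 + d1 * hI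
  have hdot1 : (x0 - x1) * (x2 - x1) + (y0 - y1) * (y2 - y1)
      = -(d2 * (m1 * (e1 * f2 - e2 * f1))) := by
    linear_combination (x2 - x1) * hE1 - (x2 - x1) * hG1 - (d1 * e1 - d2 * f1) * hG1
      + (y2 - y1) * hE2 - (y2 - y1) * hG2 - (d1 * e2 - d2 * f2) * hG2 + d2 * hIII
  rw [hdot2] at hA2
  rw [hdot0] at hA0
  rw [hdot1] at hA1
  -- abstract p and q
  obtain ⟨p, hpdef⟩ : ∃ p : ℤ, e1 * f1 + e2 * f2 = p := ⟨_, rfl⟩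
  obtain ⟨q, hqdef⟩ : ∃ q : ℤ, e1 * f2 - e2 * f1 = q := ⟨_, rfl⟩
  rw [hpdef, hqdef] at KEY
  rw [hpdef] at hA2
  rw [hqdef] at hA0 hA1
  have hp : 0 < p := by
    rcases mul_pos_iff.mp hA2 with ⟨_, h⟩ | ⟨h, _⟩
    · exact h
    · exact absurd (mul_pos hd1pos hd2pos) (by linarith)
  have hAq : 0 < m2 * q := by
    rcases mul_pos_iff.mp hA0 with ⟨_, h⟩ | ⟨h, _⟩
    · exact h
    · exact absurd hd1pos (by linarith)
  have hBq : m1 * q < 0 := by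
    have h' : d2 * (m1 * q) < 0 := by linarith
    rcases mul_neg_iff.mp h' with ⟨_, h⟩ | ⟨h, _⟩
    · exact h
    · exact absurd hd2pos (by linarith)
  -- parity: dᵢ = 2 forces mᵢ even
  have hP1 : d1 * e1 + m1 * e2 = 2 * (fx - x2) := by linear_combination hS1 - hE1
  have hP2 : m1 * e1 - d1 * e2 = 2 * (y2 - fy) := by linear_combination -hS2 + hE2
  have hQ1 : d2 * f1 + m2 * f2 = 2 * (fx - x2) := by linear_combination hT1 - hG1
  have hQ2 : m2 * f1 - d2 * f2 = 2 * (y2 - fy) := by linear_combination -hT2 + hG2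
  have parity : ∀ d m a b c1 c2 : ℤ, IsCoprime a b → d * a + m * b = 2 * c1 →
      m * a - d * b = 2 * c2 → d = 2 → Even m := by
    intro d m a b c1 c2 hcop h1 h2 hd
    by_contra hodd
    rw [Int.not_even_iff_odd] at hodd
    have hb : Even (m * b) := ⟨c1 - a, by linear_combination h1 - a * hd⟩
    have ha : Even (m * a) := ⟨c2 + b, by linear_combination h2 + b * hd⟩
    have hb' : Even b := (Int.even_mul.mp hb).resolve_left (Int.not_even_iff_odd.mpr hodd)
    have ha' : Even a := (Int.even_mul.mp ha).resolve_left (Int.not_even_iff_odd.mpr hodd)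
    obtain ⟨ka, hka⟩ := ha'
    obtain ⟨kb, hkb⟩ := hb'
    have : IsUnit (2 : ℤ) := hcop.isUnit_of_dvd' ⟨ka, by omega⟩ ⟨kb, by omega⟩
    rw [Int.isUnit_iff] at this
    omega
  have hm1ne : m1 ≠ 0 := by
    intro h; rw [h] at hBq; simp at hBq
  have hm2ne : m2 ≠ 0 := by
    intro h; rw [h] at hAq; simp at hAq
  have hb1 : d1 ≤ |m1| := abs_bound d1 m1 (by omega) hm1ne
    (parity d1 m1 e1 e2 _ _ hecop hP1 hP2)
  have hb2 : d2 ≤ |m2| := abs_bound d2 m2 (by omega) hm2ne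
    (parity d2 m2 f1 f2 _ _ hfcop hQ1 hQ2)
  -- final contradiction
  exact final_contra d1 d2 m1 m2 p q (by omega) (by omega) hp hAq hBq hb1 hb2 KEY

theorem stmt12 (V₀ V₁ V₂ F : ℤ × ℤ) (hacute : IsAcute V₀ V₁ V₂)
    (hF : IsCircumcenter F V₀ V₁ V₂)
    (h01 : llen V₁ V₂ ≤ llen V₀ V₂) (h12 : llen V₀ V₂ ≤ llen V₀ V₁) :
    3 ≤ llen V₀ V₂ := by
  by_contra hcon
  push_neg at hcon
  obtain ⟨hA0, hA1, hA2⟩ := hacute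
  obtain ⟨hc1, hc2⟩ := hF
  simp only [dotv, Prod.fst_sub, Prod.snd_sub] at hA0 hA1 hA2 hc1 hc2
  have hg1 : Int.gcd (V₀.1 - V₂.1) (V₀.2 - V₂.2) ≤ 2 := by
    unfold llen at hcon; omega
  have hg2 : Int.gcd (V₁.1 - V₂.1) (V₁.2 - V₂.2) ≤ 2 := by
    unfold llen at h01 hcon; omega
  exact main_impossible V₀.1 V₀.2 V₁.1 V₁.2 V₂.1 V₂.2 F.1 F.2 hA0 hA1 hA2 hc1 hc2 hg1 hg2
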